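/- Let X ∈ {0,1}^d have independent coordinates with P(X_j = 1) = min{m/j, 1}, γ ≥ 2, and let v ∈ {0,1}^d satisfy v^T 1 ≥ γm. Define precision(X, v) = v^T X / v^T 1. Then P(precision(X, v) ≥ p) ≤ exp(−min{ (pγ − 1 − log γ)₊² m / (4 log γ), (3/4)(pγ − 1 − log γ)₊ m }). -/

import Mathlib

open MeasureTheory Real
open scoped ENNReal NNReal

noncomputable def qn (m k : ℕ) : ℝ := min ((m:ℝ)/(k+1)) 1

lemma qn_nonneg (m k : ℕ) : 0 ≤ qn m k := le_min (by positivity) one_pos.le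

lemma qn_le_one (m k : ℕ) : qn m k ≤ 1 := min_le_right _ _

lemma cubic_le_exp {x : ℝ} (hx : 0 ≤ x) : 1 + x + x^2/2 + x^3/6 ≤ exp x := by
  have h := Real.sum_le_exp_of_nonneg hx 4
  simp [Finset.sum_range_succ, Nat.factorial] at h
  nlinarith [h]

lemma exp_neg_le {u : ℝ} (hu : 0 ≤ u) : exp (-u) ≤ 1 - u + u^2/2 := by
  have h := cubic_le_exp hu
  have h3 : 0 ≤ 1 - u + u^2/2 := by nlinarith [sq_nonneg (u-1)]
  have h5 : 1 ≤ (1 - u + u^2/2) * exp u := by nlinarith [mul_le_mul_of_nonneg_left h h3, pow_nonneg hu 3, pow_nonneg hu 4, pow_nonneg hu 5]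
  have h2 : exp (-u) * exp u = 1 := by rw [← exp_add]; simp
  nlinarith [h5, h2, exp_pos u, (exp_pos (-u)).le]

lemma phi_scale {l s : ℝ} (hl : 0 ≤ l) (hs0 : 0 ≤ s) (hs1 : s ≤ 1) :
    exp (s*l) - 1 - s*l ≤ s^2 * (exp l - 1 - l) := by
  have key : ∀ x : ℝ, exp x - 1 - x = ∑' n : ℕ, x^(n+2) / (Nat.factorial (n+2) : ℝ) := by
    intro x
    have hsum : Summable (fun n : ℕ => x^n / (Nat.factorial n : ℝ)) :=
      Real.summable_pow_div_factorial x
    have h2 := Summable.sum_add_tsum_nat_add (f := fun n : ℕ => x^n / (Nat.factorial n : ℝ)) 2 hsum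
    have hexp : exp x = ∑' n : ℕ, x^n / (Nat.factorial n : ℝ) := by
      rw [Real.exp_eq_exp_ℝ, NormedSpace.exp_eq_tsum_div]
    rw [hexp, ← h2]
    simp [Finset.sum_range_succ, Nat.factorial]
    ring
  rw [key, key]
  have hsum1 : Summable (fun n : ℕ => (s*l)^(n+2) / (Nat.factorial (n+2) : ℝ)) := by
    have := (Real.summable_pow_div_factorial (s*l)).comp_injective (add_left_injective 2)
    exact this
  have hsum2 : Summable (fun n : ℕ => l^(n+2) / (Nat.factorial (n+2) : ℝ)) := by
    have := (Real.summable_pow_div_factorial l).comp_injective (add_left_injective 2)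
    exact this
  calc ∑' n : ℕ, (s*l)^(n+2) / (Nat.factorial (n+2) : ℝ)
      ≤ ∑' n : ℕ, s^2 * (l^(n+2) / (Nat.factorial (n+2) : ℝ)) := by
        apply Summable.tsum_le_tsum _ hsum1 (hsum2.mul_left _)
        intro n
        rw [mul_pow]
        have h1 : s^(n+2) ≤ s^2 := pow_le_pow_of_le_one hs0 hs1 (by omega)
        have h2 : (0:ℝ) ≤ l^(n+2) := by positivity
        have h3 : (0:ℝ) < (Nat.factorial (n+2) : ℝ) := by positivity
        rw [div_le_iff₀ h3]
        calc s^(n+2) * l^(n+2) ≤ s^2 * l^(n+2) := by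
              exact mul_le_mul_of_nonneg_right h1 h2
          _ = s^2 * (l^(n+2) / (Nat.factorial (n+2) : ℝ)) * (Nat.factorial (n+2) : ℝ) := by
              field_simp
    _ = s^2 * ∑' n : ℕ, l^(n+2) / (Nat.factorial (n+2) : ℝ) := by rw [tsum_mul_left]

lemma exp_five_quarters_le : exp (5/4 : ℝ) ≤ 7/2 := by
  have h1 : exp 1 < 2.7182818286 := Real.exp_one_lt_d9
  have h4 : exp (5/4 : ℝ) ^ 4 = exp 5 := by
    rw [← Real.exp_nat_mul]; norm_num
  have h5 : exp (5 : ℝ) = exp 1 ^ 5 := by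
    rw [← Real.exp_nat_mul]; norm_num
  have hp : (0:ℝ) < exp (5/4) := exp_pos _
  have hx4 : exp (5/4:ℝ)^4 < 150.0625 := by
    rw [h4, h5]
    calc exp 1 ^ 5 ≤ 2.7182818286 ^ 5 := pow_le_pow_left₀ (exp_pos 1).le h1.le 5
      _ < 150.0625 := by norm_num
  nlinarith [hp, hx4, sq_nonneg (exp (5/4:ℝ) - 7/2), sq_nonneg (exp (5/4:ℝ) + 7/2),
    sq_nonneg (exp (5/4:ℝ)^2 - 49/4), sq_nonneg (exp (5/4:ℝ)^2 + 49/4)]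

-- φ(l) ≤ (4/5) l² for l ∈ [0, 5/4]

lemma phi_quad {l : ℝ} (h0 : 0 ≤ l) (h1 : l ≤ 5/4) :
    exp l - 1 - l ≤ (4/5) * l^2 := by
  have hs : (0:ℝ) ≤ (4/5)*l := by linarith
  have hs1 : (4/5)*l ≤ 1 := by linarith
  have h := phi_scale (l := 5/4) (s := (4/5)*l) (by norm_num) hs hs1
  have he : (4/5)*l*(5/4) = l := by ring
  rw [he] at h
  have h2 : exp (5/4:ℝ) - 1 - 5/4 ≤ 5/4 := by
    have := exp_five_quarters_le; linarith
  have h3 : ((4/5)*l)^2 * (exp (5/4) - 1 - 5/4) ≤ ((4/5)*l)^2 * (5/4) := by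
    apply mul_le_mul_of_nonneg_left h2 (by positivity)
  calc exp l - 1 - l ≤ ((4/5)*l)^2 * (exp (5/4) - 1 - 5/4) := h
    _ ≤ ((4/5)*l)^2 * (5/4) := h3
    _ = (4/5) * l^2 := by ring

-- the per-coordinate Bernoulli mgf bound

lemma bernoulli_mgf {q l : ℝ} (hq0 : 0 ≤ q) (hq1 : q ≤ 1) (hl : 0 ≤ l) :
    1 - q + q * exp l ≤ exp (l*q + (exp l - 1 - l) * (q * (1 - q))) := by
  set φ := exp l - 1 - l with hφ
  have hφ0 : 0 ≤ φ := by
    have := add_one_le_exp l; simp only [hφ]; linarith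
  have hφhalf : l^2/2 ≤ φ := by
    have := cubic_le_exp hl
    have : 1 + l + l^2/2 ≤ exp l := by nlinarith [pow_nonneg hl 3]
    simp only [hφ]; linarith
  -- e^{-lq} ≤ 1 - lq + q²φ
  have hneg : exp (-(l*q)) ≤ 1 - l*q + q^2 * φ := by
    have h := exp_neg_le (u := l*q) (by positivity)
    have : (l*q)^2/2 ≤ q^2 * φ := by nlinarith [sq_nonneg q, hφhalf, sq_nonneg (l*q)]
    nlinarith [h]
  -- e^{l(1-q)} ≤ 1 + l(1-q) + (1-q)²φ
  have hpos : exp ((1-q)*l) ≤ 1 + (1-q)*l + (1-q)^2 * φ := by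
    have h := phi_scale hl (by linarith : (0:ℝ) ≤ 1 - q) (by linarith : (1:ℝ) - q ≤ 1)
    simp only [hφ]; linarith
  -- combine
  have hcomb : (1-q) * exp (-(l*q)) + q * exp ((1-q)*l) ≤ 1 + φ * (q*(1-q)) := by
    have e1 : (1-q) * exp (-(l*q)) ≤ (1-q) * (1 - l*q + q^2*φ) :=
      mul_le_mul_of_nonneg_left hneg (by linarith)
    have e2 : q * exp ((1-q)*l) ≤ q * (1 + (1-q)*l + (1-q)^2*φ) :=
      mul_le_mul_of_nonneg_left hpos hq0
    nlinarith [e1, e2]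
  have hexpand : 1 - q + q * exp l = exp (l*q) * ((1-q) * exp (-(l*q)) + q * exp ((1-q)*l)) := by
    have e1 : exp (l*q) * exp (-(l*q)) = 1 := by rw [← exp_add]; simp
    have e2 : exp (l*q) * exp ((1-q)*l) = exp l := by rw [← exp_add]; congr 1; ring
    calc 1 - q + q * exp l
        = (1-q) * (exp (l*q) * exp (-(l*q))) + q * (exp (l*q) * exp ((1-q)*l)) := by
          rw [e1, e2]; ring
      _ = exp (l*q) * ((1-q) * exp (-(l*q)) + q * exp ((1-q)*l)) := by ring
  rw [hexpand]
  have h1y : 1 + φ*(q*(1-q)) ≤ exp (φ*(q*(1-q))) := by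
    have := add_one_le_exp (φ*(q*(1-q))); linarith
  calc exp (l*q) * ((1-q) * exp (-(l*q)) + q * exp ((1-q)*l))
      ≤ exp (l*q) * (1 + φ*(q*(1-q))) := by
        apply mul_le_mul_of_nonneg_left _ (exp_pos _).le
        calc (1-q) * exp (-(l*q)) + q * exp ((1-q)*l) ≤ 1 + φ * (q*(1-q)) := hcomb
          _ = 1 + φ*(q*(1-q)) := by ring
    _ ≤ exp (l*q) * exp (φ*(q*(1-q))) := mul_le_mul_of_nonneg_left h1y (exp_pos _).le
    _ = exp (l*q + φ*(q*(1-q))) := by rw [← exp_add]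

open Finset in
lemma sum_antitone_le (f : ℕ → ℝ) (hf : ∀ a b : ℕ, a ≤ b → f b ≤ f a) (A : Finset ℕ) :
    ∑ j ∈ A, f j ≤ ∑ i ∈ range A.card, f i := by
  induction A using Finset.strongInduction with
  | _ A ih =>
    rcases A.eq_empty_or_nonempty with rfl | hA
    · simp
    · set a := A.max' hA with ha
      have haA : a ∈ A := A.max'_mem hA
      have hcard : A.card ≤ a + 1 := by
        have hsub : A ⊆ range (a+1) := by
          intro x hx
          simp only [mem_range, Nat.lt_succ_iff]
          exact A.le_max' x hx
        simpa using Finset.card_le_card hsub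
      have hpos : 1 ≤ A.card := Finset.card_pos.mpr hA
      have hle : A.card - 1 ≤ a := by omega
      have hsumsplit : ∑ j ∈ A, f j = ∑ j ∈ A.erase a, f j + f a :=
        (Finset.sum_erase_add A f haA).symm
      have hcarderase : (A.erase a).card = A.card - 1 := Finset.card_erase_of_mem haA
      have hih := ih (A.erase a) (Finset.erase_ssubset haA)
      rw [hcarderase] at hih
      have hrange : ∑ i ∈ range A.card, f i = ∑ i ∈ range (A.card - 1), f i + f (A.card - 1) := by
        have : A.card = (A.card - 1) + 1 := by omega
        rw [this, Finset.sum_range_succ]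
        congr 1
      rw [hsumsplit, hrange]
      exact add_le_add hih (hf _ _ hle)

open Finset in
lemma harmonic_tail_le (m n : ℕ) (hm : 1 ≤ m) (hmn : m ≤ n) :
    ∑ k ∈ Ico m n, (1:ℝ)/(k+1) ≤ Real.log n - Real.log m := by
  induction n, hmn using Nat.le_induction with
  | base => simp
  | succ n hn ih =>
    rw [Finset.sum_Ico_succ_top hn]
    have hn1 : (1:ℝ) ≤ n := by exact_mod_cast le_trans hm hn
    have hx : (0:ℝ) < (n:ℝ)/(n+1) := by positivity
    have hlog := Real.log_le_sub_one_of_pos hx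
    rw [Real.log_div (by positivity) (by positivity)] at hlog
    have h1 : (1:ℝ)/(n+1) ≤ Real.log (n+1) - Real.log n := by
      have : (n:ℝ)/(n+1) - 1 = -(1/(n+1)) := by field_simp; ring
      rw [this] at hlog
      linarith
    have hcast : ((n:ℕ)+1 : ℝ) = ((n+1 : ℕ) : ℝ) := by push_cast; ring
    calc ∑ k ∈ Ico m n, (1:ℝ)/(k+1) + 1/(n+1)
        ≤ (Real.log n - Real.log m) + (Real.log (n+1) - Real.log n) := add_le_add ih h1
      _ = Real.log (n+1) - Real.log m := by ring
      _ = Real.log ((n+1 : ℕ) : ℝ) - Real.log m := by rw [hcast]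

lemma lambda_main {L t : ℝ} (hL : Real.log 2 ≤ L) (ht : 0 < t) :
    0 < min (t/(2*L)) (5/4) ∧ min (t/(2*L)) (5/4) ≤ 5/4 ∧ min (t/(2*L)) (5/4) ≤ t ∧
    min (t^2/(4*L)) (3/4*t) ≤ min (t/(2*L)) (5/4) * t
        - (exp (min (t/(2*L)) (5/4)) - 1 - min (t/(2*L)) (5/4)) * L := by
  have hlog2 : (0.6931471803 : ℝ) < Real.log 2 := Real.log_two_gt_d9
  have hL0 : (0.69 : ℝ) < L := by linarith
  set l := min (t/(2*L)) (5/4) with hl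
  have hl0 : 0 < l := by
    apply lt_min (by positivity) (by norm_num)
  have hl54 : l ≤ 5/4 := min_le_right _ _
  have hl2L : l ≤ t/(2*L) := min_le_left _ _
  have hlt : l ≤ t := le_trans hl2L (by rw [div_le_iff₀ (by linarith)]; nlinarith)
  have hφq : exp l - 1 - l ≤ (4/5)*l^2 := phi_quad hl0.le hl54
  have hφ0 : 0 ≤ exp l - 1 - l := by have := add_one_le_exp l; linarith
  refine ⟨hl0, hl54, hlt, ?_⟩
  rcases le_or_gt (t/(2*L)) (5/4) with hcase | hcase
  · -- l = t/(2L)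
    have hleq : l = t/(2*L) := min_eq_left hcase
    have hLt : l * (2*L) = t := by rw [hleq]; field_simp
    have hquad : (exp l - 1 - l) * L ≤ (4/5)*l^2*L := by
      apply mul_le_mul_of_nonneg_right hφq (by linarith)
    have key : t^2/(4*L) ≤ l*t - (4/5)*l^2*L := by
      have ht2 : t^2/(4*L) = l*t/2 := by
        rw [hleq]; field_simp; ring
      rw [ht2]
      nlinarith [hl0, hL0, hLt]
    calc min (t^2/(4*L)) (3/4*t) ≤ t^2/(4*L) := min_le_left _ _
      _ ≤ l*t - (4/5)*l^2*L := key
      _ ≤ l*t - (exp l - 1 - l)*L := by linarith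
  · -- l = 5/4
    have hleq : l = 5/4 := min_eq_right hcase.le
    have hLle : L ≤ 2*t/5 := by
      rw [lt_div_iff₀ (by linarith : (0:ℝ) < 2*L)] at hcase
      linarith
    have hφ54 : exp l - 1 - l ≤ 5/4 := by
      rw [hleq] at hφq ⊢; nlinarith [hφq]
    have key : 3/4*t ≤ l*t - (exp l - 1 - l)*L := by
      have h1 : (exp l - 1 - l)*L ≤ (5/4)*(2*t/5) := by
        apply mul_le_mul hφ54 hLle (by linarith) (by norm_num)
      have h2 : l*t = 5/4*t := by rw [hleq]
      nlinarith [h1, h2]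
    calc min (t^2/(4*L)) (3/4*t) ≤ 3/4*t := min_le_right _ _
      _ ≤ l*t - (exp l - 1 - l)*L := key

lemma qn_anti (m : ℕ) {a b : ℕ} (hab : a ≤ b) : qn m b ≤ qn m a := by
  apply min_le_min _ le_rfl
  apply div_le_div_of_nonneg_left (by positivity) (by positivity)
  have : (a:ℝ) ≤ b := Nat.cast_le.mpr hab
  linarith

lemma H_anti {m : ℕ} {l φ : ℝ} (hφ0 : 0 ≤ φ) (hφl : φ ≤ l) (a b : ℕ) (hab : a ≤ b) :
    l * qn m b + φ * (qn m b * (1 - qn m b)) ≤ l * qn m a + φ * (qn m a * (1 - qn m a)) := by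
  have h1 := qn_anti m hab
  have h2 := qn_nonneg m a
  have h3 := qn_nonneg m b
  have h4 := qn_le_one m a
  have h5 := qn_le_one m b
  have hc : 0 ≤ l + φ*(1 - qn m a - qn m b) := by nlinarith
  nlinarith [mul_nonneg (sub_nonneg.mpr h1) hc]

open Finset in
lemma sum_H_le (m N : ℕ) (hm : 1 ≤ m) (hmN : m ≤ N) {l φ : ℝ} (hl : 0 ≤ l) (hφ : 0 ≤ φ) :
    ∑ k ∈ range N, (l * qn m k + φ * (qn m k * (1 - qn m k)))
      ≤ l * m + (l + φ) * m * (Real.log N - Real.log m) := by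
  have hsplit : ∑ k ∈ range N, (l * qn m k + φ * (qn m k * (1 - qn m k)))
      = ∑ k ∈ range m, (l * qn m k + φ * (qn m k * (1 - qn m k)))
        + ∑ k ∈ Ico m N, (l * qn m k + φ * (qn m k * (1 - qn m k))) := by
    have h := Finset.sum_Ico_consecutive (fun k => l * qn m k + φ * (qn m k * (1 - qn m k)))
      (Nat.zero_le m) hmN
    rw [← Finset.range_eq_Ico, ← Finset.range_eq_Ico] at h
    exact h.symm
  rw [hsplit]
  have h1 : ∑ k ∈ range m, (l * qn m k + φ * (qn m k * (1 - qn m k))) = l * m := by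
    have hcon : ∀ k ∈ range m, l * qn m k + φ * (qn m k * (1 - qn m k)) = l := by
      intro k hk
      have hk' : k + 1 ≤ m := mem_range.mp hk
      have hc : ((k:ℝ)+1) ≤ m := by exact_mod_cast hk'
      have hq : qn m k = 1 := by
        apply min_eq_right
        rw [le_div_iff₀ (by positivity)]
        linarith
      rw [hq]; ring
    rw [Finset.sum_congr rfl hcon, Finset.sum_const, Finset.card_range, nsmul_eq_mul]
    ring
  have h2 : ∑ k ∈ Ico m N, (l * qn m k + φ * (qn m k * (1 - qn m k)))
      ≤ (l + φ) * m * (Real.log N - Real.log m) := by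
    have hterm : ∀ k ∈ Ico m N, l * qn m k + φ * (qn m k * (1 - qn m k))
        ≤ (l + φ) * m * (1/(k+1)) := by
      intro k hk
      have hmk : m ≤ k := (mem_Ico.mp hk).1
      have hc : (m:ℝ) ≤ k := Nat.cast_le.mpr hmk
      have hq : qn m k = (m:ℝ)/(k+1) := by
        apply min_eq_left
        rw [div_le_one (by positivity)]
        linarith
      have hq0 := qn_nonneg m k
      have hq1 := qn_le_one m k
      have hb : l * qn m k + φ * (qn m k * (1 - qn m k)) ≤ (l + φ) * qn m k := by
        nlinarith [mul_nonneg hφ (mul_self_nonneg (qn m k))]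
      calc l * qn m k + φ * (qn m k * (1 - qn m k)) ≤ (l + φ) * qn m k := hb
        _ = (l + φ) * m * (1/(k+1)) := by rw [hq]; ring
    calc ∑ k ∈ Ico m N, (l * qn m k + φ * (qn m k * (1 - qn m k)))
        ≤ ∑ k ∈ Ico m N, (l + φ) * m * (1/(k+1)) := Finset.sum_le_sum hterm
      _ = (l + φ) * m * ∑ k ∈ Ico m N, (1:ℝ)/(k+1) := by rw [Finset.mul_sum]
      _ ≤ (l + φ) * m * (Real.log N - Real.log m) := by
          apply mul_le_mul_of_nonneg_left (harmonic_tail_le m N hm hmN) (by positivity)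
  linarith

lemma final_exponent {mr γc Nr p L t l : ℝ} (hmr : 1 ≤ mr) (hγ : 2 ≤ γc)
    (hγN : γc * mr ≤ Nr) (hLdef : L = Real.log γc) (htdef : t = p*γc - 1 - L) (ht : 0 < t)
    (hl0 : 0 < l) (hlt : l ≤ t) (hφl2 : exp l - 1 - l ≤ l^2)
    (hkey : min (t^2/(4*L)) (3/4*t) ≤ l*t - (exp l - 1 - l)*L) :
    -(l*(p*Nr)) + (l*mr + (l + (exp l - 1 - l))*mr*(Real.log Nr - Real.log mr))
      ≤ -(min (t^2*mr/(4*L)) (3/4*t*mr)) := by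
  set φ := exp l - 1 - l with hφdef
  have hφ0 : 0 ≤ φ := by have := add_one_le_exp l; simp only [hφdef]; linarith
  have hL0 : 0 < L := by rw [hLdef]; exact Real.log_pos (by linarith)
  have hγ0 : (0:ℝ) < γc := by linarith
  have hmr0 : (0:ℝ) < mr := by linarith
  have hNr0 : (0:ℝ) < Nr := by nlinarith
  have hpγ : p * γc = 1 + L + t := by rw [htdef]; ring
  have hp0 : 0 < p := by
    by_contra h
    push_neg at h
    nlinarith
  have hlogm : Real.log Nr - Real.log mr = (Real.log Nr - Real.log (γc*mr)) + L := by
    rw [Real.log_mul (ne_of_gt hγ0) (ne_of_gt hmr0), hLdef]; ring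
  have hld : Real.log Nr - Real.log (γc*mr) ≤ Nr/(γc*mr) - 1 := by
    have h := Real.log_le_sub_one_of_pos (show 0 < Nr/(γc*mr) by positivity)
    rwa [Real.log_div (ne_of_gt hNr0) (by positivity)] at h
  have hD0 : 0 ≤ Nr - γc*mr := by linarith
  have hdiv : Nr/(γc*mr) - 1 = (Nr - γc*mr)/(γc*mr) := by field_simp
  have hlφ : l + φ ≤ l*(p*γc) := by
    have h1 : φ ≤ l*t := by nlinarith
    rw [hpγ]; nlinarith
  have hterm : (l+φ)*mr*(Real.log Nr - Real.log (γc*mr)) ≤ l*p*(Nr - γc*mr) := by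
    have a1 : (l+φ)*mr*(Real.log Nr - Real.log (γc*mr)) ≤ (l+φ)*mr*((Nr - γc*mr)/(γc*mr)) := by
      apply mul_le_mul_of_nonneg_left _ (by positivity)
      rw [← hdiv]; exact hld
    have a2 : (l+φ)*mr*((Nr - γc*mr)/(γc*mr)) = ((l+φ)*(Nr - γc*mr))/γc := by
      field_simp
    have a3 : ((l+φ)*(Nr - γc*mr))/γc ≤ (l*(p*γc)*(Nr - γc*mr))/γc := by
      gcongr
    have a4 : (l*(p*γc)*(Nr - γc*mr))/γc = l*p*(Nr - γc*mr) := by field_simp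
    calc (l+φ)*mr*(Real.log Nr - Real.log (γc*mr))
        ≤ (l+φ)*mr*((Nr - γc*mr)/(γc*mr)) := a1
      _ = ((l+φ)*(Nr - γc*mr))/γc := a2
      _ ≤ (l*(p*γc)*(Nr - γc*mr))/γc := a3
      _ = l*p*(Nr - γc*mr) := a4
  have hmin : min (t^2*mr/(4*L)) (3/4*t*mr) ≤ mr * min (t^2/(4*L)) (3/4*t) := by
    rcases le_total (t^2/(4*L)) (3/4*t) with h | h
    · rw [min_eq_left h]
      calc min (t^2*mr/(4*L)) (3/4*t*mr) ≤ t^2*mr/(4*L) := min_le_left _ _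
        _ = mr * (t^2/(4*L)) := by ring
    · rw [min_eq_right h]
      calc min (t^2*mr/(4*L)) (3/4*t*mr) ≤ 3/4*t*mr := min_le_right _ _
        _ = mr * (3/4*t) := by ring
  have hkey' : mr * min (t^2/(4*L)) (3/4*t) ≤ mr*(l*t - φ*L) :=
    mul_le_mul_of_nonneg_left hkey hmr0.le
  have hident : l*(p*γc)*mr - l*mr - (l+φ)*mr*L = mr*(l*t - φ*L) := by rw [htdef]; ring
  have hexp : l*(p*Nr) = l*p*(Nr - γc*mr) + l*(p*γc)*mr := by ring
  have hsplit2 : (l+φ)*mr*(Real.log Nr - Real.log mr)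
      = (l+φ)*mr*(Real.log Nr - Real.log (γc*mr)) + (l+φ)*mr*L := by rw [hlogm]; ring
  have step1 : -(l*(p*Nr)) + (l*mr + (l+φ)*mr*(Real.log Nr - Real.log mr))
      ≤ -(mr*(l*t - φ*L)) := by linarith
  exact le_trans step1 (neg_le_neg (le_trans hmin hkey'))


/-- The Zipfian product measure on `{0,1}^d`: coordinates are independent with
`P(X_j = 1) = min{m/j, 1}` (indexing coordinates by `j = 1,…,d`). -/
noncomputable def zipfMeasure (d m : ℕ) : Measure (Fin d → Bool) :=
  Measure.pi fun j =>
    (PMF.bernoulli (min ((m : ℝ≥0) / ((j : ℕ) + 1)) 1) (min_le_right _ _)).toMeasure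


lemma chernoff (d m : ℕ) (l : ℝ) (hl : 0 ≤ l) (v : Fin d → ℝ) (c : ℝ) :
    zipfMeasure d m {ω | c ≤ ∑ j, v j * (if ω j then (1:ℝ) else 0)}
      ≤ ENNReal.ofReal (Real.exp (-(l*c))
          * ∏ j : Fin d, (1 - qn m j + qn m j * Real.exp (l * v j))) := by
  classical
  set μj : Fin d → Measure Bool := fun j =>
    (PMF.bernoulli (min ((m : ℝ≥0) / ((j : ℕ) + 1)) 1) (min_le_right _ _)).toMeasure with hμj
  have hzipf : zipfMeasure d m = Measure.pi μj := rfl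
  set pe : Fin d → ℝ≥0∞ := fun j => (min ((m : ℝ≥0) / ((j : ℕ) + 1)) 1 : ℝ≥0∞) with hpe
  have hqcoe : ∀ j : Fin d, pe j = ENNReal.ofReal (qn m (j : ℕ)) := by
    intro j
    have h1 : pe j = ((min ((m : ℝ≥0) / ((j:ℕ) + 1)) 1 : ℝ≥0) : ℝ≥0∞) := by
      rw [hpe]
      push_cast [ENNReal.coe_min, ENNReal.coe_div (by positivity : ((j:ℕ) + 1 : ℝ≥0) ≠ 0)]
      norm_num
    rw [h1, ← ENNReal.ofReal_coe_nnreal]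
    congr 1
    all_goals simp only [qn]
    all_goals push_cast
    all_goals norm_num
  have hq1 : ∀ j : Fin d, pe j ≤ 1 := fun j => min_le_right _ _
  have hpe' : ∀ j : Fin d, ((min ((m : ℝ≥0) / ((j:ℕ) + 1)) 1 : ℝ≥0) : ℝ≥0∞) = pe j := by
    intro j
    rw [hpe]
    push_cast [ENNReal.coe_min, ENNReal.coe_div (by positivity : ((j:ℕ) + 1 : ℝ≥0) ≠ 0)]
    norm_num
  have hqtop : ∀ j : Fin d, pe j ≠ ⊤ := fun j => by
    rw [hqcoe j]; exact ENNReal.ofReal_ne_top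
  set Z : (Fin d → Bool) → ℝ≥0∞ :=
    fun ω => ENNReal.ofReal (exp (l * ∑ j, v j * (if ω j then (1:ℝ) else 0))) with hZ
  have hsub : {ω : Fin d → Bool | c ≤ ∑ j, v j * (if ω j then (1:ℝ) else 0)}
      ⊆ {ω | ENNReal.ofReal (exp (l*c)) ≤ Z ω} := by
    intro ω hω
    simp only [Set.mem_setOf_eq] at hω ⊢
    apply ENNReal.ofReal_le_ofReal
    apply Real.exp_le_exp.mpr
    exact mul_le_mul_of_nonneg_left hω hl
  have hmarkov := mul_meas_ge_le_lintegral₀ (μ := Measure.pi μj)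
    (measurable_of_finite Z).aemeasurable (ENNReal.ofReal (exp (l*c)))
  -- compute the lintegral
  have hsingle : ∀ ω : Fin d → Bool, Measure.pi μj {ω} = ∏ j, μj j {ω j} := by
    intro ω
    have : ({ω} : Set (Fin d → Bool)) = Set.pi Set.univ (fun j => {ω j}) := by
      ext x
      simp [funext_iff, Set.mem_pi]
    rw [this, Measure.pi_pi]
  have hZprod : ∀ ω : Fin d → Bool,
      Z ω = ∏ j, ENNReal.ofReal (exp (l * (v j * (if ω j then (1:ℝ) else 0)))) := by
    intro ω
    rw [hZ]
    simp only
    rw [Finset.mul_sum, Real.exp_sum]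
    exact ENNReal.ofReal_prod_of_nonneg (fun j _ => (exp_pos _).le)
  have hμtrue : ∀ j : Fin d, μj j {true} = ENNReal.ofReal (qn m j) := by
    intro j
    rw [hμj]
    simp only
    rw [PMF.toMeasure_apply_singleton _ _ (measurableSet_singleton true)]
    rw [PMF.bernoulli_apply]
    simp only [Bool.cond_true]
    rw [hpe' j]
    exact hqcoe j
  have hμfalse : ∀ j : Fin d, μj j {false} = ENNReal.ofReal (1 - qn m j) := by
    intro j
    rw [hμj]
    simp only
    rw [PMF.toMeasure_apply_singleton _ _ (measurableSet_singleton false)]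
    rw [PMF.bernoulli_apply]
    simp only [Bool.cond_false]
    have : (1 : ℝ≥0∞) - pe j = ENNReal.ofReal (1 - qn m (j:ℕ)) := by
      rw [hqcoe j, ← ENNReal.ofReal_one, ENNReal.ofReal_sub _ (qn_nonneg m (j:ℕ))]
    rw [ENNReal.coe_sub, ENNReal.coe_one, hpe' j]
    exact this
  have hIj : ∀ j : Fin d,
      (∑ b : Bool, ENNReal.ofReal (exp (l * (v j * (if b then (1:ℝ) else 0)))) * μj j {b})
        = ENNReal.ofReal (1 - qn m j + qn m j * exp (l * v j)) := by
    intro j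
    rw [Fintype.sum_bool]
    rw [hμtrue j, hμfalse j]
    have e1 : (if (true : Bool) then (1:ℝ) else 0) = 1 := rfl
    have e2 : (if (false : Bool) then (1:ℝ) else 0) = 0 := rfl
    rw [e1, e2]
    have e3 : l * (v j * 1) = l * v j := by ring
    have e4 : l * (v j * 0) = 0 := by ring
    rw [e3, e4, Real.exp_zero, ENNReal.ofReal_one, one_mul]
    rw [← ENNReal.ofReal_mul (exp_pos _).le]
    rw [← ENNReal.ofReal_add (mul_nonneg (exp_pos _).le (qn_nonneg m (j:ℕ)))
      (by nlinarith [qn_le_one m (j:ℕ)])]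
    congr 1
    ring
  have hlint : ∫⁻ ω, Z ω ∂(Measure.pi μj)
      = ∏ j : Fin d, ENNReal.ofReal (1 - qn m j + qn m j * exp (l * v j)) := by
    rw [MeasureTheory.lintegral_fintype]
    calc ∑ ω : Fin d → Bool, Z ω * Measure.pi μj {ω}
        = ∑ ω : Fin d → Bool, ∏ j,
            (ENNReal.ofReal (exp (l * (v j * (if ω j then (1:ℝ) else 0)))) * μj j {ω j}) := by
          apply Finset.sum_congr rfl
          intro ω _
          rw [hZprod ω, hsingle ω, Finset.prod_mul_distrib]
      _ = ∏ j : Fin d, ∑ b : Bool,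
            ENNReal.ofReal (exp (l * (v j * (if b then (1:ℝ) else 0)))) * μj j {b} := by
          rw [Finset.prod_univ_sum]
          rw [Fintype.piFinset_univ]
      _ = ∏ j : Fin d, ENNReal.ofReal (1 - qn m j + qn m j * exp (l * v j)) :=
          Finset.prod_congr rfl (fun j _ => hIj j)
  -- assemble
  have hc0 : (0:ℝ) < exp (l*c) := exp_pos _
  have hcne : ENNReal.ofReal (exp (l*c)) ≠ 0 := by
    simp [ENNReal.ofReal_eq_zero, not_le, hc0]
  have hctop : ENNReal.ofReal (exp (l*c)) ≠ ⊤ := ENNReal.ofReal_ne_top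
  calc zipfMeasure d m {ω | c ≤ ∑ j, v j * (if ω j then (1:ℝ) else 0)}
      ≤ Measure.pi μj {ω | ENNReal.ofReal (exp (l*c)) ≤ Z ω} := by
        rw [hzipf]; exact measure_mono hsub
    _ = (ENNReal.ofReal (exp (l*c)))⁻¹
          * (ENNReal.ofReal (exp (l*c)) * Measure.pi μj {ω | ENNReal.ofReal (exp (l*c)) ≤ Z ω}) := by
        rw [← mul_assoc, ENNReal.inv_mul_cancel hcne hctop, one_mul]
    _ ≤ (ENNReal.ofReal (exp (l*c)))⁻¹ * ∫⁻ ω, Z ω ∂(Measure.pi μj) :=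
        mul_le_mul_right hmarkov _
    _ = ENNReal.ofReal (exp (-(l*c)))
          * ∏ j : Fin d, ENNReal.ofReal (1 - qn m j + qn m j * exp (l * v j)) := by
        rw [hlint, ← ENNReal.ofReal_inv_of_pos hc0, ← Real.exp_neg]
    _ = ENNReal.ofReal (exp (-(l*c))
          * ∏ j : Fin d, (1 - qn m j + qn m j * exp (l * v j))) := by
        rw [ENNReal.ofReal_mul (exp_pos _).le]
        congr 1
        rw [ENNReal.ofReal_prod_of_nonneg]
        intro j _
        nlinarith [qn_le_one m j, qn_nonneg m j, Real.exp_pos (l * v j)]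

set_option maxHeartbeats 2000000 in
/-- precision reconstruction bound under the Zipfian prior. -/
theorem precision_bound (d m : ℕ) (hm : 1 ≤ m)
    (γ : ℝ) (hγ : 2 ≤ γ) (p : ℝ)
    (v : Fin d → ℝ) (hv : ∀ j, v j = 0 ∨ v j = 1)
    (hsum : γ * m ≤ ∑ j, v j) :
    zipfMeasure d m
        {ω | p ≤ (∑ j, v j * (if ω j then (1 : ℝ) else 0)) / (∑ j, v j)}
      ≤ ENNReal.ofReal (Real.exp (-(min
          ((max (p * γ - 1 - Real.log γ) 0) ^ 2 * m / (4 * Real.log γ))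
          (3 / 4 * (max (p * γ - 1 - Real.log γ) 0) * m)))) := by
  classical
  set L : ℝ := Real.log γ with hLdef
  rcases le_or_gt (p * γ - 1 - L) 0 with hcase | ht
  · -- trivial case
    have hmax : max (p * γ - 1 - L) 0 = 0 := max_eq_right hcase
    rw [hmax]
    have hrhs : min ((0:ℝ)^2 * (m:ℝ) / (4 * L)) (3/4 * (0:ℝ) * (m:ℝ)) = 0 := by norm_num
    rw [hrhs]
    haveI : IsProbabilityMeasure (zipfMeasure d m) := by
      unfold zipfMeasure; infer_instance
    simpa using prob_le_one
  · -- main case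
    set t : ℝ := p * γ - 1 - L with htdef
    have hmax : max t 0 = t := max_eq_left ht.le
    rw [hmax]
    have hL2 : Real.log 2 ≤ L := by
      rw [hLdef]; exact Real.log_le_log (by norm_num) hγ
    obtain ⟨hl0, hl54, hlt, hkey⟩ := lambda_main hL2 ht
    set l : ℝ := min (t/(2*L)) (5/4) with hldef
    set φ : ℝ := exp l - 1 - l with hφdef
    have hφ0 : 0 ≤ φ := by have := add_one_le_exp l; rw [hφdef]; linarith
    have hφq : φ ≤ (4/5) * l^2 := phi_quad hl0.le hl54
    have hφl2 : φ ≤ l^2 := by nlinarith [sq_nonneg l]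
    have hφl : φ ≤ l := by nlinarith [hl0]
    -- the support set
    set A : Finset (Fin d) := Finset.univ.filter (fun j => v j = 1) with hA
    set N : ℕ := A.card with hN
    have hS : (∑ j, v j) = (N : ℝ) := by
      rw [← Finset.sum_filter_add_sum_filter_not Finset.univ (fun j => v j = 1) v]
      have h1 : ∑ j ∈ Finset.univ.filter (fun j => v j = 1), v j = (N:ℝ) := by
        rw [Finset.sum_congr rfl (fun j hj => (Finset.mem_filter.mp hj).2)]
        simp [hN, hA]
      have h2 : ∑ j ∈ Finset.univ.filter (fun j => ¬(v j = 1)), v j = 0 := by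
        apply Finset.sum_eq_zero
        intro j hj
        rcases hv j with h | h
        · exact h
        · exact absurd h (Finset.mem_filter.mp hj).2
      rw [h1, h2, add_zero]
    have hγN : γ * m ≤ (N:ℝ) := by rw [← hS]; exact hsum
    have hmr1 : (1:ℝ) ≤ (m:ℝ) := by exact_mod_cast hm
    have hmN : m ≤ N := by
      have : (m:ℝ) ≤ (N:ℝ) := by nlinarith
      exact_mod_cast this
    have hN0 : (0:ℝ) < (N:ℝ) := by nlinarith
    -- event rewrite
    have hset : {ω : Fin d → Bool | p ≤ (∑ j, v j * (if ω j then (1:ℝ) else 0)) / (∑ j, v j)}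
        = {ω : Fin d → Bool | p * (N:ℝ) ≤ ∑ j, v j * (if ω j then (1:ℝ) else 0)} := by
      ext ω
      simp only [Set.mem_setOf_eq, hS]
      rw [le_div_iff₀ hN0]
    rw [hset]
    -- apply Chernoff
    refine le_trans (chernoff d m l hl0.le v (p * (N:ℝ))) (ENNReal.ofReal_le_ofReal ?_)
    -- real chain
    have hprodsplit :
        (∏ j ∈ A, (1 - qn m j + qn m j * exp (l * v j)))
          * ∏ j ∈ Finset.univ.filter (fun j => ¬(v j = 1)), (1 - qn m j + qn m j * exp (l * v j))
        = ∏ j : Fin d, (1 - qn m j + qn m j * exp (l * v j)) := by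
      rw [hA]
      exact Finset.prod_filter_mul_prod_filter_not Finset.univ _ _
    have hnotA : ∏ j ∈ Finset.univ.filter (fun j => ¬(v j = 1)),
        (1 - qn m j + qn m j * exp (l * v j)) = 1 := by
      apply Finset.prod_eq_one
      intro j hj
      have hv0 : v j = 0 := by
        rcases hv j with h | h
        · exact h
        · exact absurd h (Finset.mem_filter.mp hj).2
      rw [hv0, mul_zero, Real.exp_zero]
      ring
    have hAcong : ∏ j ∈ A, (1 - qn m j + qn m j * exp (l * v j))
        = ∏ j ∈ A, (1 - qn m j + qn m j * exp l) := by
      apply Finset.prod_congr rfl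
      intro j hj
      have hv1 : v j = 1 := (Finset.mem_filter.mp hj).2
      rw [hv1, mul_one]
    have hprod : ∏ j : Fin d, (1 - qn m j + qn m j * exp (l * v j))
        = ∏ j ∈ A, (1 - qn m j + qn m j * exp l) := by
      rw [← hprodsplit, hnotA, mul_one, hAcong]
    have hmgf : ∏ j ∈ A, (1 - qn m j + qn m j * exp l)
        ≤ exp (∑ j ∈ A, (l * qn m j + φ * (qn m j * (1 - qn m j)))) := by
      rw [Real.exp_sum]
      apply Finset.prod_le_prod
      · intro j _
        nlinarith [qn_nonneg m (j:ℕ), qn_le_one m (j:ℕ), (exp_pos l).le]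
      · intro j _
        have := bernoulli_mgf (qn_nonneg m (j:ℕ)) (qn_le_one m (j:ℕ)) hl0.le
        rw [hφdef]
        exact this
    have hsubsum : ∑ j ∈ A, (l * qn m j + φ * (qn m j * (1 - qn m j)))
        ≤ ∑ k ∈ Finset.range N, (l * qn m k + φ * (qn m k * (1 - qn m k))) := by
      have himg : ∑ j ∈ A, (l * qn m j + φ * (qn m j * (1 - qn m j)))
          = ∑ k ∈ A.image (Fin.val), (l * qn m k + φ * (qn m k * (1 - qn m k))) := by
        rw [Finset.sum_image (fun x _ y _ h => Fin.val_injective h)]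
      have hcardimg : (A.image (Fin.val)).card = N := by
        rw [Finset.card_image_of_injective A Fin.val_injective]
      rw [himg]
      have := sum_antitone_le (fun k => l * qn m k + φ * (qn m k * (1 - qn m k)))
        (H_anti hφ0 hφl) (A.image (Fin.val))
      rwa [hcardimg] at this
    have hsumH := sum_H_le m N hm hmN hl0.le hφ0
    -- final exponent
    have hfin := final_exponent hmr1 hγ hγN hLdef htdef ht hl0 hlt hφl2 hkey
    calc exp (-(l * (p * (N:ℝ)))) * ∏ j : Fin d, (1 - qn m j + qn m j * exp (l * v j))
        = exp (-(l * (p * (N:ℝ)))) * ∏ j ∈ A, (1 - qn m j + qn m j * exp l) := by rw [hprod]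
      _ ≤ exp (-(l * (p * (N:ℝ))))
            * exp (∑ j ∈ A, (l * qn m j + φ * (qn m j * (1 - qn m j)))) := by
          exact mul_le_mul_of_nonneg_left hmgf (exp_pos _).le
      _ = exp (-(l * (p * (N:ℝ))) + ∑ j ∈ A, (l * qn m j + φ * (qn m j * (1 - qn m j)))) := by
          rw [← Real.exp_add]
      _ ≤ exp (-(min (t^2 * m / (4*L)) (3/4 * t * m))) := by
          apply Real.exp_le_exp.mpr
          have hγmid : -(l * (p * (N:ℝ)))
              + (l * m + (l + φ) * m * (Real.log N - Real.log m))
              ≤ -(min (t^2 * m / (4*L)) (3/4 * t * m)) := by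
            rw [hφdef]
            exact hfin
          have hstep : -(l * (p * (N:ℝ))) + ∑ j ∈ A, (l * qn m j + φ * (qn m j * (1 - qn m j)))
              ≤ -(l * (p * (N:ℝ))) + (l * (m:ℝ) + (l + φ) * (m:ℝ) * (Real.log N - Real.log m)) := by
            linarith [hsubsum, hsumH]
          exact le_trans hstep hγmid
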